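/- Let p ≥ q ≥ 1 be integers, let C = G_{p,q}, let r be an integer with p ≤ r ≤ p+q, and let f ∈ S_{p+q}. Then d(f,g) > r for every g ∈ C if and only if at least one of the following holds: [p] = ⋃_{i∈[p]} A^C_{i→f(i)}, or [p+1,p+q] = ⋃_{i∈[p+1,p+q]} A^C_{i→f(i)}. -/

import Mathlib

open Equiv

/-- The ℓ∞-distance between two permutations of `Fin n`. -/
noncomputable def linfDist {n : ℕ} (f g : Perm (Fin n)) : ℕ :=
  Finset.univ.sup fun i : Fin n => (((f i).val : ℤ) - ((g i).val : ℤ)).natAbs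

/-- The distance from a permutation to a code `C`. -/
noncomputable def distToCode {n : ℕ} (f : Perm (Fin n)) (C : Set (Perm (Fin n))) : ℕ :=
  sInf (linfDist f '' C)

/-- The covering radius of a code `C ⊆ Sₙ`. -/
noncomputable def coveringRadius {n : ℕ} (C : Set (Perm (Fin n))) : ℕ :=
  sSup (Set.range fun f : Perm (Fin n) => distToCode f C)

/-- The relabeling `C^π = π C π⁻¹`. -/
def conjCode {n : ℕ} (π : Perm (Fin n)) (C : Set (Perm (Fin n))) : Set (Perm (Fin n)) :=
  (fun g => π * g * π⁻¹) '' C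

/-- Maximum covering radius over all relabelings. -/
noncomputable def Lmax {n : ℕ} (C : Set (Perm (Fin n))) : ℕ :=
  sSup (Set.range fun π : Perm (Fin n) => coveringRadius (conjCode π C))

/-- Minimum covering radius over all relabelings. -/
noncomputable def Lmin {n : ℕ} (C : Set (Perm (Fin n))) : ℕ :=
  sInf (Set.range fun π : Perm (Fin n) => coveringRadius (conjCode π C))

/-- The `(p,q)`-type group `G_{p,q} = ⟨(1,…,p), (p+1,…,p+q)⟩ ⊆ S_{p+q}`
(using `0`-indexed `Fin (p+q)`). -/
def Gpq (p q : ℕ) : Subgroup (Perm (Fin (p + q))) :=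
  Subgroup.closure
    { ((List.finRange p).map (Fin.castLE (Nat.le_add_right p q))).formPerm,
      ((List.finRange q).map (Fin.natAdd p)).formPerm }

/-- The transitive cyclic group `Gₙ = ⟨(1,2,…,n)⟩`. -/
def Gcyc (n : ℕ) : Subgroup (Perm (Fin n)) := Subgroup.closure {finRotate n}

/-- The natural dihedral group
`Dₙ = ⟨(1,2,…,n), ∏_{i=1}^{⌊n/2⌋} (i, n-i)⟩` (using `0`-indexed `Fin n`). -/
def Dn (n : ℕ) : Subgroup (Perm (Fin n)) :=
  Subgroup.closure
    { finRotate n,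
      (((List.finRange (n / 2)).map fun i =>
        Equiv.swap (⟨i.val, by have := i.isLt; omega⟩ : Fin n)
          (⟨n - 2 - i.val, by have := i.isLt; omega⟩ : Fin n)).prod) }

/-- For `C = G_{p,q}`, `i,j ∈ [p+q]` (0-indexed here), the set `A^C_{i→j}`:
the set of `g⁻¹(1)` (resp. `g⁻¹(p+1)`) over all `g ∈ C` with `|g(i) - j| > r`,
according to whether `i ∈ [p]` or `i ∈ [p+1,p+q]`. -/
def Aset (p q : ℕ) (hq : 0 < q) (r : ℕ) (i j : Fin (p + q)) : Set (Fin (p + q)) :=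
  if (i : ℕ) < p then
    {x | ∃ g ∈ Gpq p q, r < (((g i).val : ℤ) - ((j : ℕ) : ℤ)).natAbs ∧
      x = g⁻¹ ⟨0, i.pos⟩}
  else
    {x | ∃ g ∈ Gpq p q, r < (((g i).val : ℤ) - ((j : ℕ) : ℤ)).natAbs ∧
      x = g⁻¹ ⟨p, Nat.lt_add_of_pos_right hq⟩}

namespace Stmt4Aux

variable (p q : ℕ)

def sig1 : Perm (Fin (p + q)) :=
  ((List.finRange p).map (Fin.castLE (Nat.le_add_right p q))).formPerm

def sig2 : Perm (Fin (p + q)) :=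
  ((List.finRange q).map (Fin.natAdd p)).formPerm

lemma mem_l1 {x : Fin (p + q)} :
    x ∈ (List.finRange p).map (Fin.castLE (Nat.le_add_right p q)) ↔ (x : ℕ) < p := by
  simp only [List.mem_map, List.mem_finRange, true_and]
  constructor
  · rintro ⟨a, rfl⟩; exact a.isLt
  · intro h; exact ⟨⟨x, h⟩, Fin.ext rfl⟩

lemma mem_l2 {x : Fin (p + q)} :
    x ∈ (List.finRange q).map (Fin.natAdd p) ↔ p ≤ (x : ℕ) := by
  simp only [List.mem_map, List.mem_finRange, true_and]
  constructor
  · rintro ⟨a, rfl⟩; simp [Fin.natAdd]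
  · intro h
    exact ⟨⟨(x : ℕ) - p, by have := x.isLt; omega⟩, Fin.ext (by simp [Fin.natAdd]; omega)⟩

lemma nodup_l1 : ((List.finRange p).map (Fin.castLE (Nat.le_add_right p q))).Nodup :=
  (List.nodup_finRange p).map (Fin.castLE_injective _)

lemma nodup_l2 : ((List.finRange q).map (Fin.natAdd p)).Nodup :=
  (List.nodup_finRange q).map (fun a b h => by
    have : p + (a : ℕ) = p + (b : ℕ) := congrArg Fin.val h
    exact Fin.ext (by omega))

lemma sig1_apply_ge {i : Fin (p + q)} (h : p ≤ (i : ℕ)) : sig1 p q i = i :=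
  List.formPerm_apply_of_notMem (by rw [mem_l1]; omega)

lemma sig2_apply_lt {i : Fin (p + q)} (h : (i : ℕ) < p) : sig2 p q i = i :=
  List.formPerm_apply_of_notMem (by rw [mem_l2]; omega)

lemma sig1_apply_val {i : Fin (p + q)} (h : (i : ℕ) < p) :
    (sig1 p q i : ℕ) = ((i : ℕ) + 1) % p := by
  have hlen : ((List.finRange p).map (Fin.castLE (Nat.le_add_right p q))).length = p := by simp
  have hi : (i : ℕ) < ((List.finRange p).map (Fin.castLE (Nat.le_add_right p q))).length := by omega
  have hgi : ((List.finRange p).map (Fin.castLE (Nat.le_add_right p q)))[(i : ℕ)] = i := by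
    simp [List.getElem_map]
  have := List.formPerm_apply_getElem _ (nodup_l1 p q) (i : ℕ) hi
  rw [hgi] at this
  rw [sig1, this]
  simp [List.getElem_map, hlen]

lemma sig2_apply_val {i : Fin (p + q)} (h : p ≤ (i : ℕ)) :
    (sig2 p q i : ℕ) = p + (((i : ℕ) - p) + 1) % q := by
  have hlen : ((List.finRange q).map (Fin.natAdd p)).length = q := by simp
  have hiq : (i : ℕ) - p < q := by have := i.isLt; omega
  have hi : (i : ℕ) - p < ((List.finRange q).map (Fin.natAdd p)).length := by omega
  have hgi : ((List.finRange q).map (Fin.natAdd p))[(i : ℕ) - p] = i := by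
    simp [List.getElem_map]
    exact Fin.ext (by simp [Fin.natAdd]; omega)
  have := List.formPerm_apply_getElem _ (nodup_l2 p q) ((i : ℕ) - p) hi
  rw [hgi] at this
  rw [sig2, this]
  simp [List.getElem_map, hlen, Fin.natAdd]


lemma sig1_pow_ge (m : ℕ) {i : Fin (p + q)} (h : p ≤ (i : ℕ)) : (sig1 p q ^ m) i = i := by
  induction m with
  | zero => simp
  | succ m ih => rw [pow_succ, Perm.mul_apply, sig1_apply_ge p q h, ih]

lemma sig2_pow_lt (m : ℕ) {i : Fin (p + q)} (h : (i : ℕ) < p) : (sig2 p q ^ m) i = i := by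
  induction m with
  | zero => simp
  | succ m ih => rw [pow_succ, Perm.mul_apply, sig2_apply_lt p q h, ih]

lemma sig1_pow_val (m : ℕ) {i : Fin (p + q)} (h : (i : ℕ) < p) :
    ((sig1 p q ^ m) i : ℕ) = ((i : ℕ) + m) % p := by
  have hp : 0 < p := by omega
  induction m with
  | zero => simp [Nat.mod_eq_of_lt h]
  | succ m ih =>
    rw [pow_succ', Perm.mul_apply]
    have h1 : ((sig1 p q ^ m) i : ℕ) < p := by rw [ih]; exact Nat.mod_lt _ hp
    rw [sig1_apply_val p q h1, ih, Nat.mod_add_mod]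
    congr 1

lemma sig2_pow_val (m : ℕ) {i : Fin (p + q)} (h : p ≤ (i : ℕ)) :
    ((sig2 p q ^ m) i : ℕ) = p + (((i : ℕ) - p) + m) % q := by
  have hq : 0 < q := by have := i.isLt; omega
  induction m with
  | zero =>
    simp only [pow_zero, Perm.one_apply, Nat.add_zero,
      Nat.mod_eq_of_lt (show (i:ℕ) - p < q by have := i.isLt; omega)]
    omega
  | succ m ih =>
    rw [pow_succ', Perm.mul_apply]
    have h1 : p ≤ ((sig2 p q ^ m) i : ℕ) := by rw [ih]; omega
    rw [sig2_apply_val p q h1, ih]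
    have h2 : p + ((i:ℕ) - p + m) % q - p = ((i:ℕ) - p + m) % q := by omega
    rw [h2, Nat.mod_add_mod]
    congr 1

lemma sig1_pow_p : sig1 p q ^ p = 1 := by
  ext i
  by_cases h : (i : ℕ) < p
  · rw [sig1_pow_val p q p h, Nat.add_mod_right, Nat.mod_eq_of_lt h]
    simp
  · rw [sig1_pow_ge p q p (le_of_not_gt h)]
    simp

lemma sig2_pow_q : sig2 p q ^ q = 1 := by
  ext i
  by_cases h : (i : ℕ) < p
  · rw [sig2_pow_lt p q q h]; simp
  · rw [sig2_pow_val p q q (le_of_not_gt h), Nat.add_mod_right,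
      Nat.mod_eq_of_lt (show (i:ℕ) - p < q by have := i.isLt; omega)]
    simp only [Perm.one_apply]
    omega

lemma commute_sig : Commute (sig1 p q) (sig2 p q) := by
  apply Equiv.Perm.Disjoint.commute
  intro x
  by_cases h : (x : ℕ) < p
  · right; exact sig2_apply_lt p q h
  · left; exact sig1_apply_ge p q (by omega)

lemma mem_Gpq (hp : 0 < p) (hq : 0 < q) (g : Perm (Fin (p + q))) :
    g ∈ Gpq p q ↔ ∃ m n : ℕ, g = sig1 p q ^ m * sig2 p q ^ n := by
  constructor
  · intro hg
    induction hg using Subgroup.closure_induction with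
    | mem x hx =>
      rcases hx with hx | hx
      · exact ⟨1, 0, by simp [hx, sig1]⟩
      · exact ⟨0, 1, by simp [Set.mem_singleton_iff.mp hx, sig2]⟩
    | one => exact ⟨0, 0, by simp⟩
    | mul x y hx hy ihx ihy =>
      obtain ⟨m, n, rfl⟩ := ihx
      obtain ⟨m', n', rfl⟩ := ihy
      refine ⟨m + m', n + n', ?_⟩
      have hc : sig2 p q ^ n * sig1 p q ^ m' = sig1 p q ^ m' * sig2 p q ^ n :=
        ((commute_sig p q).symm.pow_pow n m')
      rw [pow_add, pow_add]
      calc sig1 p q ^ m * sig2 p q ^ n * (sig1 p q ^ m' * sig2 p q ^ n')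
          = sig1 p q ^ m * (sig2 p q ^ n * sig1 p q ^ m') * sig2 p q ^ n' := by group
        _ = sig1 p q ^ m * (sig1 p q ^ m' * sig2 p q ^ n) * sig2 p q ^ n' := by rw [hc]
        _ = sig1 p q ^ m * sig1 p q ^ m' * (sig2 p q ^ n * sig2 p q ^ n') := by group
    | inv x hx ihx =>
      obtain ⟨m, n, rfl⟩ := ihx
      refine ⟨m * (p - 1), n * (q - 1), ?_⟩
      have h1 : sig1 p q ^ (m * (p - 1)) * sig1 p q ^ m = 1 := by
        rw [← pow_add]
        have : m * (p - 1) + m = p * m := by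
          rw [← Nat.mul_succ, Nat.succ_eq_add_one, Nat.sub_add_cancel hp, Nat.mul_comm]
        rw [this, pow_mul, sig1_pow_p, one_pow]
      have h2 : sig2 p q ^ (n * (q - 1)) * sig2 p q ^ n = 1 := by
        rw [← pow_add]
        have : n * (q - 1) + n = q * n := by
          rw [← Nat.mul_succ, Nat.succ_eq_add_one, Nat.sub_add_cancel hq, Nat.mul_comm]
        rw [this, pow_mul, sig2_pow_q, one_pow]
      have hc : sig2 p q ^ (n * (q - 1)) * sig1 p q ^ m = sig1 p q ^ m * sig2 p q ^ (n * (q - 1)) :=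
        ((commute_sig p q).symm.pow_pow _ _)
      rw [eq_comm, eq_inv_iff_mul_eq_one]
      calc sig1 p q ^ (m*(p-1)) * sig2 p q ^ (n*(q-1)) * (sig1 p q ^ m * sig2 p q ^ n)
          = sig1 p q ^ (m*(p-1)) * (sig2 p q ^ (n*(q-1)) * sig1 p q ^ m) * sig2 p q ^ n := by
            group
        _ = sig1 p q ^ (m*(p-1)) * (sig1 p q ^ m * sig2 p q ^ (n*(q-1))) * sig2 p q ^ n := by
            rw [hc]
        _ = (sig1 p q ^ (m*(p-1)) * sig1 p q ^ m) * (sig2 p q ^ (n*(q-1)) * sig2 p q ^ n) := by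
            group
        _ = 1 := by rw [h1, h2, one_mul]
  · rintro ⟨m, n, rfl⟩
    have h1 : sig1 p q ∈ Gpq p q := Subgroup.subset_closure (Set.mem_insert _ _)
    have h2 : sig2 p q ∈ Gpq p q :=
      Subgroup.subset_closure (Set.mem_insert_of_mem _ rfl)
    exact mul_mem (pow_mem h1 m) (pow_mem h2 n)


lemma g_apply_lt (m n : ℕ) {i : Fin (p + q)} (hi : (i : ℕ) < p) :
    (sig1 p q ^ m * sig2 p q ^ n) i = (sig1 p q ^ m) i := by
  rw [Perm.mul_apply, sig2_pow_lt p q n hi]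

lemma g_apply_ge (m n : ℕ) {i : Fin (p + q)} (hi : p ≤ (i : ℕ)) :
    (sig1 p q ^ m * sig2 p q ^ n) i = (sig2 p q ^ n) i := by
  rw [Perm.mul_apply]
  exact sig1_pow_ge p q m (by rw [sig2_pow_val p q n hi]; omega)

lemma inv1_lt (m : ℕ) {z : Fin (p + q)} (hz : (z : ℕ) < p) :
    (((sig1 p q ^ m)⁻¹ z : Fin (p + q)) : ℕ) < p := by
  by_contra hc
  have h1 : (sig1 p q ^ m) ((sig1 p q ^ m)⁻¹ z) = (sig1 p q ^ m)⁻¹ z :=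
    sig1_pow_ge p q m (le_of_not_gt hc)
  rw [(show ∀ (e : Perm (Fin (p + q))) (x : Fin (p + q)), e (e⁻¹ x) = x from fun e x => e.apply_symm_apply x)] at h1
  rw [h1] at hz
  exact hc hz

lemma inv2_ge (n : ℕ) {z : Fin (p + q)} (hz : p ≤ (z : ℕ)) :
    p ≤ (((sig2 p q ^ n)⁻¹ z : Fin (p + q)) : ℕ) := by
  by_contra hc
  have h1 : (sig2 p q ^ n) ((sig2 p q ^ n)⁻¹ z) = (sig2 p q ^ n)⁻¹ z :=
    sig2_pow_lt p q n (lt_of_not_ge hc)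
  rw [(show ∀ (e : Perm (Fin (p + q))) (x : Fin (p + q)), e (e⁻¹ x) = x from fun e x => e.apply_symm_apply x)] at h1
  rw [h1] at hz
  exact hc hz

lemma ginv_base1 (m n : ℕ) {z : Fin (p + q)} (hz : (z : ℕ) < p) :
    (sig1 p q ^ m * sig2 p q ^ n)⁻¹ z = (sig1 p q ^ m)⁻¹ z := by
  rw [mul_inv_rev, Perm.mul_apply]
  have h1 : (((sig1 p q ^ m)⁻¹ z : Fin (p + q)) : ℕ) < p := inv1_lt p q m hz
  have h2 : (sig2 p q ^ n) ((sig1 p q ^ m)⁻¹ z) = (sig1 p q ^ m)⁻¹ z := sig2_pow_lt p q n h1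
  nth_rewrite 1 [← h2]
  rw [(show ∀ (e : Perm (Fin (p + q))) (x : Fin (p + q)), e⁻¹ (e x) = x from fun e x => e.symm_apply_apply x)]

lemma ginv_base2 (m n : ℕ) {z : Fin (p + q)} (hz : p ≤ (z : ℕ)) :
    (sig1 p q ^ m * sig2 p q ^ n)⁻¹ z = (sig2 p q ^ n)⁻¹ z := by
  rw [mul_inv_rev, Perm.mul_apply]
  have h1 : (sig1 p q ^ m) z = z := sig1_pow_ge p q m hz
  nth_rewrite 1 [← h1]
  rw [(show ∀ (e : Perm (Fin (p + q))) (x : Fin (p + q)), e⁻¹ (e x) = x from fun e x => e.symm_apply_apply x)]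

lemma det1 {m m' : ℕ} {z z' : Fin (p + q)} (hz : (z : ℕ) = 0) (hz' : (z' : ℕ) = 0)
    (hzp : (z : ℕ) < p)
    (h : (sig1 p q ^ m)⁻¹ z = (sig1 p q ^ m')⁻¹ z') {i : Fin (p + q)} (hi : (i : ℕ) < p) :
    (sig1 p q ^ m) i = (sig1 p q ^ m') i := by
  have hzp' : (z' : ℕ) < p := by omega
  have hy : (((sig1 p q ^ m)⁻¹ z : Fin (p + q)) : ℕ) < p := inv1_lt p q m hzp
  have hy' : (((sig1 p q ^ m')⁻¹ z' : Fin (p + q)) : ℕ) < p := inv1_lt p q m' hzp'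
  have t1 := sig1_pow_val p q m hy
  rw [(show ∀ (e : Perm (Fin (p + q))) (x : Fin (p + q)), e (e⁻¹ x) = x from fun e x => e.apply_symm_apply x), hz] at t1
  have t2 := sig1_pow_val p q m' hy'
  rw [(show ∀ (e : Perm (Fin (p + q))) (x : Fin (p + q)), e (e⁻¹ x) = x from fun e x => e.apply_symm_apply x), hz'] at t2
  rw [← h] at t2
  have e1 : (((sig1 p q ^ m)⁻¹ z : Fin (p + q)) : ℕ) + m ≡
      (((sig1 p q ^ m)⁻¹ z : Fin (p + q)) : ℕ) + m' [MOD p] := by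
    show _ % p = _ % p
    omega
  have hmm : m ≡ m' [MOD p] := Nat.ModEq.add_left_cancel' _ e1
  apply Fin.ext
  rw [sig1_pow_val p q m hi, sig1_pow_val p q m' hi]
  exact Nat.ModEq.add_left _ hmm

lemma det2 {n n' : ℕ} {z z' : Fin (p + q)} (hz : (z : ℕ) = p) (hz' : (z' : ℕ) = p)
    (h : (sig2 p q ^ n)⁻¹ z = (sig2 p q ^ n')⁻¹ z') {i : Fin (p + q)} (hi : p ≤ (i : ℕ)) :
    (sig2 p q ^ n) i = (sig2 p q ^ n') i := by
  have hzp : p ≤ (z : ℕ) := by omega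
  have hzp' : p ≤ (z' : ℕ) := by omega
  have hy : p ≤ (((sig2 p q ^ n)⁻¹ z : Fin (p + q)) : ℕ) := inv2_ge p q n hzp
  have hy' : p ≤ (((sig2 p q ^ n')⁻¹ z' : Fin (p + q)) : ℕ) := inv2_ge p q n' hzp'
  have t1 := sig2_pow_val p q n hy
  rw [(show ∀ (e : Perm (Fin (p + q))) (x : Fin (p + q)), e (e⁻¹ x) = x from fun e x => e.apply_symm_apply x), hz] at t1
  have t2 := sig2_pow_val p q n' hy'
  rw [(show ∀ (e : Perm (Fin (p + q))) (x : Fin (p + q)), e (e⁻¹ x) = x from fun e x => e.apply_symm_apply x), hz'] at t2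
  rw [← h] at t2
  have e1 : ((((sig2 p q ^ n)⁻¹ z : Fin (p + q)) : ℕ) - p) + n ≡
      ((((sig2 p q ^ n)⁻¹ z : Fin (p + q)) : ℕ) - p) + n' [MOD q] := by
    show _ % q = _ % q
    omega
  have hnn : n ≡ n' [MOD q] := Nat.ModEq.add_left_cancel' _ e1
  apply Fin.ext
  rw [sig2_pow_val p q n hi, sig2_pow_val p q n' hi]
  have h2 : (((i : ℕ) - p) + n) % q = (((i : ℕ) - p) + n') % q := Nat.ModEq.add_left _ hnn
  omega

lemma surj1 (hp : 0 < p) {z : Fin (p + q)} (hz : (z : ℕ) = 0) (x : Fin (p + q))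
    (hx : (x : ℕ) < p) : ∃ m : ℕ, (sig1 p q ^ m)⁻¹ z = x := by
  refine ⟨(p - (x : ℕ)) % p, ?_⟩
  have hval : (((sig1 p q ^ ((p - (x : ℕ)) % p)) x : Fin (p + q)) : ℕ) = 0 := by
    rw [sig1_pow_val p q _ hx]
    by_cases hx0 : (x : ℕ) = 0
    · rw [hx0, Nat.sub_zero, Nat.mod_self]
      simp
    · rw [Nat.mod_eq_of_lt (show p - (x : ℕ) < p by omega),
        show (x : ℕ) + (p - (x : ℕ)) = p by omega, Nat.mod_self]
  have : (sig1 p q ^ ((p - (x : ℕ)) % p)) x = z := Fin.ext (by rw [hval, hz])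
  rw [← this, (show ∀ (e : Perm (Fin (p + q))) (x : Fin (p + q)), e⁻¹ (e x) = x from fun e x => e.symm_apply_apply x)]

lemma surj2 (hq : 0 < q) {z : Fin (p + q)} (hz : (z : ℕ) = p) (x : Fin (p + q))
    (hx : p ≤ (x : ℕ)) : ∃ n : ℕ, (sig2 p q ^ n)⁻¹ z = x := by
  refine ⟨(q - ((x : ℕ) - p)) % q, ?_⟩
  have hxq : (x : ℕ) - p < q := by have := x.isLt; omega
  have hval : (((sig2 p q ^ ((q - ((x : ℕ) - p)) % q)) x : Fin (p + q)) : ℕ) = p := by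
    rw [sig2_pow_val p q _ hx]
    by_cases hx0 : (x : ℕ) - p = 0
    · rw [hx0, Nat.sub_zero, Nat.mod_self]
      simp
    · rw [Nat.mod_eq_of_lt (show q - ((x : ℕ) - p) < q by omega),
        show ((x : ℕ) - p) + (q - ((x : ℕ) - p)) = q by omega, Nat.mod_self]
      simp
  have : (sig2 p q ^ ((q - ((x : ℕ) - p)) % q)) x = z := Fin.ext (by rw [hval, hz])
  rw [← this, (show ∀ (e : Perm (Fin (p + q))) (x : Fin (p + q)), e⁻¹ (e x) = x from fun e x => e.symm_apply_apply x)]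


end Stmt4Aux

/-- `f` is `r`-exposed by `C = G_{p,q}` (i.e. `d(f,g) > r` for every `g ∈ C`)
iff `[p] = ⋃_{i∈[p]} A^C_{i→f(i)}` or `[p+1,p+q] = ⋃_{i∈[p+1,p+q]} A^C_{i→f(i)}`
(0-indexed: `[p]` is `{x | x < p}` and `[p+1,p+q]` is `{x | p ≤ x}`). -/
theorem stmt_4 (p q : ℕ) (hq : 1 ≤ q) (hpq : q ≤ p) (r : ℕ) (hr1 : p ≤ r) (hr2 : r ≤ p + q)
    (f : Perm (Fin (p + q))) :
    (∀ g ∈ Gpq p q, r < linfDist f g) ↔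
      ({x : Fin (p + q) | (x : ℕ) < p} =
        ⋃ i ∈ {i : Fin (p + q) | (i : ℕ) < p}, Aset p q hq r i (f i)) ∨
      ({x : Fin (p + q) | p ≤ (x : ℕ)} =
        ⋃ i ∈ {i : Fin (p + q) | p ≤ (i : ℕ)}, Aset p q hq r i (f i)) := by
  classical
  have hp : 0 < p := lt_of_lt_of_le hq hpq
  have hq0 : 0 < q := hq
  have hn : 0 < p + q := by omega
  have hmem : ∀ g : Perm (Fin (p + q)), g ∈ Gpq p q ↔ ∃ m n : ℕ, g = (Stmt4Aux.sig1 p q) ^ m * (Stmt4Aux.sig2 p q) ^ n :=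
    Stmt4Aux.mem_Gpq p q hp hq0
  have keyval : ∀ (m n : ℕ) (i : Fin (p + q)),
      ((((f i).val : ℤ)) - ((((Stmt4Aux.sig1 p q) ^ m * (Stmt4Aux.sig2 p q) ^ n) i).val : ℤ)).natAbs
        = if (i : ℕ) < p then ((((((Stmt4Aux.sig1 p q) ^ m) i).val : ℤ)) - ((f i).val : ℤ)).natAbs
          else ((((((Stmt4Aux.sig2 p q) ^ n) i).val : ℤ)) - ((f i).val : ℤ)).natAbs := by
    intro m n i
    by_cases hip : (i : ℕ) < p
    · rw [if_pos hip, Stmt4Aux.g_apply_lt p q m n hip]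
      omega
    · rw [if_neg hip, Stmt4Aux.g_apply_ge p q m n (le_of_not_gt hip)]
      omega
  have main :
      (∀ g ∈ Gpq p q, r < linfDist f g) ↔
        ((∀ m : ℕ, ∃ i : Fin (p + q), (i : ℕ) < p ∧
            r < ((((((Stmt4Aux.sig1 p q) ^ m) i).val : ℤ)) - ((f i).val : ℤ)).natAbs) ∨
         (∀ n : ℕ, ∃ i : Fin (p + q), p ≤ (i : ℕ) ∧
            r < ((((((Stmt4Aux.sig2 p q) ^ n) i).val : ℤ)) - ((f i).val : ℤ)).natAbs)) := by
    constructor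
    · intro H
      by_contra hc
      push_neg at hc
      obtain ⟨⟨m, hm⟩, ⟨n, hn'⟩⟩ := hc
      have hg := H ((Stmt4Aux.sig1 p q) ^ m * (Stmt4Aux.sig2 p q) ^ n) ((hmem _).mpr ⟨m, n, rfl⟩)
      rw [linfDist] at hg
      obtain ⟨i, -, hi⟩ := Finset.lt_sup_iff.mp hg
      rw [keyval m n i] at hi
      by_cases hip : (i : ℕ) < p
      · rw [if_pos hip] at hi
        exact absurd hi (not_lt.mpr (hm i hip))
      · rw [if_neg hip] at hi
        exact absurd hi (not_lt.mpr (hn' i (le_of_not_gt hip)))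
    · rintro (hA | hB) g hg <;> obtain ⟨m, n, rfl⟩ := (hmem g).mp hg <;>
        rw [linfDist] <;> apply Finset.lt_sup_iff.mpr
      · obtain ⟨i, hip, hri⟩ := hA m
        exact ⟨i, Finset.mem_univ _, by rw [keyval m n i, if_pos hip]; exact hri⟩
      · obtain ⟨i, hip, hri⟩ := hB n
        exact ⟨i, Finset.mem_univ _, by rw [keyval m n i, if_neg (not_lt.mpr hip)]; exact hri⟩
  rw [main]
  apply or_congr
  · -- block 1
    constructor
    · intro hA
      apply Set.Subset.antisymm
      · intro x hx
        obtain ⟨m, hm⟩ := Stmt4Aux.surj1 p q hp (z := ⟨0, hn⟩) rfl x hx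
        obtain ⟨i, hip, hri⟩ := hA m
        refine Set.mem_biUnion hip ?_
        rw [Aset, if_pos hip]
        refine ⟨(Stmt4Aux.sig1 p q) ^ m * (Stmt4Aux.sig2 p q) ^ 0, (hmem _).mpr ⟨m, 0, rfl⟩, ?_, ?_⟩
        · rw [Stmt4Aux.g_apply_lt p q m 0 hip]; exact hri
        · rw [Stmt4Aux.ginv_base1 p q m 0 (show ((⟨0, i.pos⟩ : Fin (p + q)) : ℕ) < p from hp)]
          exact hm.symm
      · intro x hx
        obtain ⟨i, hip0, hxA⟩ := Set.mem_iUnion₂.mp hx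
        have hip : (i : ℕ) < p := hip0
        rw [Aset, if_pos hip] at hxA
        obtain ⟨g, hg, -, rfl⟩ := hxA
        obtain ⟨m, n, rfl⟩ := (hmem g).mp hg
        rw [Stmt4Aux.ginv_base1 p q m n (show ((⟨0, i.pos⟩ : Fin (p + q)) : ℕ) < p from hp)]
        exact Stmt4Aux.inv1_lt p q m hp
    · intro hEq m
      have hx : (((Stmt4Aux.sig1 p q) ^ m)⁻¹ (⟨0, hn⟩ : Fin (p + q)) : Fin (p + q)) ∈
          {x : Fin (p + q) | (x : ℕ) < p} := Stmt4Aux.inv1_lt p q m hp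
      rw [hEq] at hx
      obtain ⟨i, hip0, hxA⟩ := Set.mem_iUnion₂.mp hx
      have hip : (i : ℕ) < p := hip0
      rw [Aset, if_pos hip] at hxA
      obtain ⟨g, hg, hri, hinv⟩ := hxA
      obtain ⟨m', n', rfl⟩ := (hmem g).mp hg
      rw [Stmt4Aux.ginv_base1 p q m' n'
        (show ((⟨0, i.pos⟩ : Fin (p + q)) : ℕ) < p from hp)] at hinv
      have hdet : ((Stmt4Aux.sig1 p q) ^ m') i = ((Stmt4Aux.sig1 p q) ^ m) i :=
        Stmt4Aux.det1 p q (z := ⟨0, i.pos⟩) (z' := ⟨0, hn⟩) rfl rfl hp hinv.symm hip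
      refine ⟨i, hip, ?_⟩
      rw [Stmt4Aux.g_apply_lt p q m' n' hip, hdet] at hri
      exact hri
  · -- block 2
    constructor
    · intro hB
      apply Set.Subset.antisymm
      · intro x hx
        obtain ⟨n, hm⟩ := Stmt4Aux.surj2 p q hq0
          (z := ⟨p, Nat.lt_add_of_pos_right hq⟩) rfl x hx
        obtain ⟨i, hip, hri⟩ := hB n
        refine Set.mem_biUnion hip ?_
        rw [Aset, if_neg (not_lt.mpr hip)]
        refine ⟨(Stmt4Aux.sig1 p q) ^ 0 * (Stmt4Aux.sig2 p q) ^ n, (hmem _).mpr ⟨0, n, rfl⟩, ?_, ?_⟩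
        · rw [Stmt4Aux.g_apply_ge p q 0 n hip]; exact hri
        · rw [Stmt4Aux.ginv_base2 p q 0 n
            (show p ≤ ((⟨p, Nat.lt_add_of_pos_right hq⟩ : Fin (p + q)) : ℕ) from le_refl p)]
          exact hm.symm
      · intro x hx
        obtain ⟨i, hip0, hxA⟩ := Set.mem_iUnion₂.mp hx
        have hip : p ≤ (i : ℕ) := hip0
        rw [Aset, if_neg (not_lt.mpr hip)] at hxA
        obtain ⟨g, hg, -, rfl⟩ := hxA
        obtain ⟨m, n, rfl⟩ := (hmem g).mp hg
        rw [Stmt4Aux.ginv_base2 p q m n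
          (show p ≤ ((⟨p, Nat.lt_add_of_pos_right hq⟩ : Fin (p + q)) : ℕ) from le_refl p)]
        exact Stmt4Aux.inv2_ge p q n (le_refl p)
    · intro hEq n
      have hx : (((Stmt4Aux.sig2 p q) ^ n)⁻¹ (⟨p, Nat.lt_add_of_pos_right hq⟩ : Fin (p + q)) : Fin (p + q)) ∈
          {x : Fin (p + q) | p ≤ (x : ℕ)} := Stmt4Aux.inv2_ge p q n (le_refl p)
      rw [hEq] at hx
      obtain ⟨i, hip0, hxA⟩ := Set.mem_iUnion₂.mp hx
      have hip : p ≤ (i : ℕ) := hip0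
      rw [Aset, if_neg (not_lt.mpr hip)] at hxA
      obtain ⟨g, hg, hri, hinv⟩ := hxA
      obtain ⟨m', n', rfl⟩ := (hmem g).mp hg
      rw [Stmt4Aux.ginv_base2 p q m' n'
        (show p ≤ ((⟨p, Nat.lt_add_of_pos_right hq⟩ : Fin (p + q)) : ℕ) from le_refl p)] at hinv
      have hdet : ((Stmt4Aux.sig2 p q) ^ n') i = ((Stmt4Aux.sig2 p q) ^ n) i :=
        Stmt4Aux.det2 p q (z := ⟨p, Nat.lt_add_of_pos_right hq⟩)
          (z' := ⟨p, Nat.lt_add_of_pos_right hq⟩) rfl rfl hinv.symm hip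
      refine ⟨i, hip, ?_⟩
      rw [Stmt4Aux.g_apply_ge p q m' n' hip, hdet] at hri
      exact hri
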